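/- Let {S_i}_{i=1}^N be an IFS satisfying the open set condition, with α determined by Σ r_i^α = 1, r = min_i r_i, and levels 𝒥_n as above. Suppose a λ-quasi-natural random walk exists with weights {p_i}: c(x,x⁻) = p_x λ^{−|x|} and there is M ≥ 1 with M⁻¹ ≤ c(x,y) ≤ M for all edges (strict reversibility). Then, using #𝒥_m ∈ [r^{−αm}, r^{−α(m+1)}) and c(𝒥_{m+1}) = λ^{−m}·m(ϑ) where c(𝒥_m) = Σ_{x∈𝒥_m} c(x,x⁻), it follows that λ = r^α. -/

import Mathlib

/-- if a λ-quasi-natural random walk is strictly reversible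
(all conductances in [M⁻¹, M]), then, using r^{-αm} ≤ #𝒥_m < r^{-α(m+1)} and
c(𝒥_{m+1}) = λ^{-m}·m(ϑ), necessarily λ = r^α. -/
theorem stmt15 (lam r α M mϑ : ℝ)
    (hlam0 : 0 < lam) (hlam1 : lam < 1) (hr0 : 0 < r) (hr1 : r < 1)
    (hα : 0 < α) (hM : 1 ≤ M) (hmϑ : 0 < mϑ)
    (cardJ : ℕ → ℕ) (cJ : ℕ → ℝ)
    (hcard : ∀ m : ℕ, r ^ (-(α * (m : ℝ))) ≤ (cardJ m : ℝ) ∧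
      (cardJ m : ℝ) < r ^ (-(α * ((m : ℝ) + 1))))
    (hcJ : ∀ m : ℕ, cJ (m + 1) = lam ^ (-(m : ℝ)) * mϑ)
    (hbound : ∀ m : ℕ, M⁻¹ * (cardJ m : ℝ) ≤ cJ m ∧ cJ m ≤ M * (cardJ m : ℝ)) :
    lam = r ^ α := by
  set q := r ^ α with hq
  have hq0 : 0 < q := Real.rpow_pos_of_pos hr0 α
  have hM0 : 0 < M := lt_of_lt_of_le one_pos hM
  have hkey : ∀ m : ℕ, mϑ * q ^ 2 / M ≤ (lam / q) ^ m ∧ (lam / q) ^ m ≤ M * mϑ * q := by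
    intro m
    have h1 := (hbound (m + 1)).1
    have h2 := (hbound (m + 1)).2
    have h3 := (hcard (m + 1)).1
    have h4 := (hcard (m + 1)).2
    rw [hcJ m] at h1 h2
    have e1 : lam ^ (-(m : ℝ)) = (lam ^ m)⁻¹ := by
      rw [Real.rpow_neg hlam0.le, Real.rpow_natCast]
    have e2 : r ^ (-(α * ((m + 1 : ℕ) : ℝ))) = (q ^ (m + 1))⁻¹ := by
      rw [Real.rpow_neg hr0.le, Real.rpow_mul hr0.le, Real.rpow_natCast]
    have e3 : r ^ (-(α * (((m + 1 : ℕ) : ℝ) + 1))) = (q ^ (m + 2))⁻¹ := by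
      have h : (((m + 1 : ℕ) : ℝ) + 1) = ((m + 2 : ℕ) : ℝ) := by push_cast; ring
      rw [h, Real.rpow_neg hr0.le, Real.rpow_mul hr0.le, Real.rpow_natCast]
    rw [e2] at h3; rw [e3] at h4; rw [e1] at h1 h2
    have hL : 0 < lam ^ m := pow_pos hlam0 m
    have hQ : 0 < q ^ m := pow_pos hq0 m
    have hA : M⁻¹ * (q ^ (m + 1))⁻¹ ≤ (lam ^ m)⁻¹ * mϑ := le_trans
      (by gcongr) h1
    have hB : (lam ^ m)⁻¹ * mϑ ≤ M * (q ^ (m + 2))⁻¹ := le_trans h2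
      (mul_le_mul_of_nonneg_left h4.le hM0.le)
    have hq1 : q ^ (m + 1) = q * q ^ m := by ring
    have hq2 : q ^ (m + 2) = q ^ 2 * q ^ m := by ring
    rw [hq1] at hA; rw [hq2] at hB
    rw [div_pow]
    have hA' : (1:ℝ) / (M * (q * q ^ m)) ≤ mϑ / lam ^ m := by
      rw [one_div, mul_inv, div_eq_inv_mul]; exact hA
    have hB' : mϑ / lam ^ m ≤ M / (q ^ 2 * q ^ m) := by
      rw [div_eq_inv_mul, div_eq_mul_inv]; exact hB
    have hA'' := (div_le_div_iff₀ (by positivity) hL).mp hA'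
    have hB'' := (div_le_div_iff₀ hL (by positivity)).mp hB'
    constructor
    · rw [div_le_div_iff₀ hM0 hQ]
      nlinarith [hB'']
    · rw [div_le_iff₀ hQ]
      nlinarith [hA'']
  set t := lam / q with ht
  have ht0 : 0 < t := div_pos hlam0 hq0
  rcases lt_trichotomy t 1 with h | h | h
  · exfalso
    obtain ⟨n, hn⟩ := exists_pow_lt_of_lt_one (by positivity : (0:ℝ) < mϑ * q ^ 2 / M) h
    exact absurd (hkey n).1 (not_le.mpr hn)
  · field_simp [ht] at h
    rw [ht, div_eq_one_iff_eq hq0.ne'] at h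
    linarith [h]
  · exfalso
    obtain ⟨n, hn⟩ := pow_unbounded_of_one_lt (M * mϑ * q) h
    exact absurd (hkey n).2 (not_le.mpr hn)
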